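/- For every real x₁ > 0, ∫_{1/2}^∞ (4πz√(2z-1))⁻¹ e^{-x₁² z} dz = (1/2)·(1-Φ(x₁)), where Φ is the standard normal CDF. -/

import Mathlib

open Real MeasureTheory

/-- The standard normal CDF. -/
noncomputable def stdNormalCDF (t : ℝ) : ℝ :=
  ∫ s in Set.Iic t, (Real.sqrt (2 * Real.pi))⁻¹ * Real.exp (-s ^ 2 / 2)

section Aux
open Set Filter


lemma tail_deriv (c : ℝ) (hc : 0 < c) (s : ℝ) :
    HasDerivAt (fun s : ℝ => -Real.exp (-(c * s^2)) / (2*c)) (s * Real.exp (-(c * s^2))) s := by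
  have h1 : HasDerivAt (fun s : ℝ => -(c * s^2)) (-(c * (2*s))) s := by
    simpa using ((hasDerivAt_pow 2 s).const_mul c).fun_neg
  have h2 := (h1.exp.fun_neg).div_const (2*c)
  refine h2.congr_deriv ?_
  field_simp

lemma tail_tendsto (c : ℝ) (hc : 0 < c) :
    Tendsto (fun s : ℝ => -Real.exp (-(c * s^2)) / (2*c)) atTop (nhds 0) := by
  have h1 : Tendsto (fun s : ℝ => -(c * s^2)) atTop atBot := by
    have := (tendsto_pow_atTop (n := 2) (by norm_num)).const_mul_atTop hc
    exact tendsto_neg_atBot_iff.mpr this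
  have h2 : Tendsto (fun s : ℝ => Real.exp (-(c * s^2))) atTop (nhds 0) :=
    Real.tendsto_exp_atBot.comp h1
  have := (h2.neg).div_const (2*c)
  simpa using this

lemma tail_int (c a : ℝ) (hc : 0 < c) (ha : 0 ≤ a) :
    IntegrableOn (fun s => s * Real.exp (-(c * s^2))) (Ioi a) ∧
    ∫ s in Ioi a, s * Real.exp (-(c * s^2)) = Real.exp (-(c * a^2)) / (2*c) := by
  have hd : ∀ s ∈ Ici a, HasDerivAt (fun s : ℝ => -Real.exp (-(c * s^2)) / (2*c))
      (s * Real.exp (-(c * s^2))) s := fun s _ => tail_deriv c hc s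
  have hpos : ∀ s ∈ Ioi a, 0 ≤ s * Real.exp (-(c * s^2)) := fun s hs =>
    mul_nonneg (le_trans ha (le_of_lt hs)) (Real.exp_nonneg _)
  have ht := tail_tendsto c hc
  refine ⟨integrableOn_Ioi_deriv_of_nonneg' hd hpos ht, ?_⟩
  rw [integral_Ioi_of_hasDerivAt_of_nonneg' hd hpos ht]
  field_simp
  ring

lemma himg : (fun u : ℝ => (1+u^2)/2) '' Ioi 0 = Ioi (1/2 : ℝ) := by
  ext y
  simp only [mem_image, mem_Ioi]
  constructor
  · rintro ⟨u, hu, rfl⟩; nlinarith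
  · intro hy
    refine ⟨Real.sqrt (2*y - 1), Real.sqrt_pos.mpr (by linarith), ?_⟩
    rw [Real.sq_sqrt (by linarith)]
    ring

lemma step_subst (x₁ : ℝ) (hx : 0 < x₁) :
    (∫ z in Set.Ioi (1 / 2 : ℝ),
        (4 * Real.pi * z * Real.sqrt (2 * z - 1))⁻¹ * Real.exp (-(x₁ ^ 2 * z))) =
    ∫ u in Ioi (0:ℝ), (2*Real.pi*(1+u^2))⁻¹ * Real.exp (-(x₁^2*((1+u^2)/2))) := by
  have hd : ∀ u ∈ Ioi (0:ℝ), HasDerivWithinAt (fun u : ℝ => (1+u^2)/2) u (Ioi 0) u := by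
    intro u _
    have : HasDerivAt (fun u : ℝ => (1+u^2)/2) (2*u/2) u := by
      simpa using (((hasDerivAt_pow 2 u).const_add 1).div_const 2)
    simpa using this.hasDerivWithinAt
  have hinj : InjOn (fun u : ℝ => (1+u^2)/2) (Ioi 0) := by
    intro a ha b hb h
    simp only [mem_Ioi] at ha hb
    nlinarith [sq_nonneg (a-b), sq_nonneg (a+b)]
  have := integral_image_eq_integral_abs_deriv_smul measurableSet_Ioi hd hinj
    (fun z => (4 * Real.pi * z * Real.sqrt (2 * z - 1))⁻¹ * Real.exp (-(x₁ ^ 2 * z)))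
  rw [← himg, this]
  apply setIntegral_congr_fun measurableSet_Ioi
  intro u hu
  simp only [mem_Ioi] at hu
  have h1 : 2 * ((1+u^2)/2) - 1 = u^2 := by ring
  simp only [smul_eq_mul]
  rw [h1, Real.sqrt_sq hu.le, abs_of_pos hu]
  have hpi := Real.pi_pos
  have : 4 * Real.pi * ((1 + u ^ 2) / 2) * u = u * (2 * Real.pi * (1 + u ^ 2)) := by ring
  rw [this, mul_inv]
  field_simp

lemma step_inner (x₁ u : ℝ) (hx : 0 < x₁) :
    (2*Real.pi*(1+u^2))⁻¹ * Real.exp (-(x₁^2*((1+u^2)/2))) =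
    (2*Real.pi)⁻¹ * ∫ s in Ioi x₁, s * Real.exp (-((1+u^2)/2 * s^2)) := by
  have hc : 0 < (1+u^2)/2 := by positivity
  rw [(tail_int ((1+u^2)/2) x₁ hc hx.le).2]
  have hpi := Real.pi_pos
  have h : (1+u^2)/2 * x₁^2 = x₁^2*((1+u^2)/2) := by ring
  rw [h]
  field_simp

lemma norm_int (x₁ u : ℝ) (hx : 0 < x₁) :
    (∫ s in Ioi x₁, ‖s * Real.exp (-((1+u^2)/2 * s^2))‖) =
    Real.exp (-((1+u^2)/2 * x₁^2)) / (1+u^2) := by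
  have hc : 0 < (1+u^2)/2 := by positivity
  have h1 : (∫ s in Ioi x₁, ‖s * Real.exp (-((1+u^2)/2 * s^2))‖) =
      ∫ s in Ioi x₁, s * Real.exp (-((1+u^2)/2 * s^2)) := by
    apply setIntegral_congr_fun measurableSet_Ioi
    intro s hs
    simp only [mem_Ioi] at hs
    dsimp only
    rw [Real.norm_eq_abs, abs_of_nonneg (mul_nonneg (le_of_lt (hx.trans hs)) (Real.exp_nonneg _))]
  rw [h1, (tail_int ((1+u^2)/2) x₁ hc hx.le).2]
  congr 1
  ring

lemma step_fubini (x₁ : ℝ) (hx : 0 < x₁) :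
    (∫ u in Ioi (0:ℝ), ∫ s in Ioi x₁, s * Real.exp (-((1+u^2)/2 * s^2))) =
    ∫ s in Ioi x₁, ∫ u in Ioi (0:ℝ), s * Real.exp (-((1+u^2)/2 * s^2)) := by
  apply integral_integral_swap
  have hcont : Continuous (Function.uncurry fun (u s : ℝ) => s * Real.exp (-((1+u^2)/2 * s^2))) := by
    apply Continuous.mul
    · exact continuous_snd
    · exact (Continuous.neg (by continuity)).rexp
  rw [integrable_prod_iff hcont.aestronglyMeasurable]
  constructor
  · filter_upwards with u
    exact (tail_int ((1+u^2)/2) x₁ (by positivity) hx.le).1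
  · have heq : (fun u => ∫ s in Ioi x₁, ‖s * Real.exp (-((1+u^2)/2 * s^2))‖) =
        fun u => Real.exp (-((1+u^2)/2 * x₁^2)) / (1+u^2) := by
      funext u; exact norm_int x₁ u hx
    simp only [Function.uncurry_apply_pair]
    rw [heq]
    apply Integrable.mono (integrable_inv_one_add_sq.restrict (s := Ioi 0))
    · apply Continuous.aestronglyMeasurable
      apply Continuous.div
      · exact (Continuous.neg (by continuity)).rexp
      · continuity
      · intro u; positivity
    · filter_upwards with u
      rw [Real.norm_eq_abs, Real.norm_eq_abs]
      have h1 : (0:ℝ) < 1 + u^2 := by positivity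
      rw [abs_of_nonneg (by positivity), abs_of_nonneg (by positivity : (0:ℝ) ≤ (1+u^2)⁻¹)]
      rw [div_le_iff₀ h1, inv_mul_cancel₀ (ne_of_gt h1)]
      exact Real.exp_le_one_iff.mpr (by nlinarith [sq_nonneg u, sq_nonneg x₁])

lemma step_gauss (x₁ s : ℝ) (hs : 0 < s) :
    (∫ u in Ioi (0:ℝ), s * Real.exp (-((1+u^2)/2 * s^2))) =
    Real.sqrt (2*Real.pi)/2 * Real.exp (-(s^2/2)) := by
  have h1 : ∀ u : ℝ, s * Real.exp (-((1+u^2)/2 * s^2)) =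
      (s * Real.exp (-(s^2/2))) * Real.exp (-(s^2/2) * u^2) := by
    intro u
    rw [mul_assoc, ← Real.exp_add]
    congr 2
    ring
  simp_rw [h1]
  rw [integral_const_mul, integral_gaussian_Ioi]
  have h2 : Real.sqrt (Real.pi / (s^2/2)) = Real.sqrt (2*Real.pi) / s := by
    rw [show Real.pi / (s^2/2) = 2*Real.pi / s^2 by ring,
      Real.sqrt_div (by positivity), Real.sqrt_sq hs.le]
  rw [h2]
  field_simp

lemma gauss_eq : (fun s : ℝ => Real.exp (-(s^2/2))) = fun s => Real.exp (-(1/2:ℝ)*s^2) := by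
  funext s; congr 1; ring

lemma cdf_compl (x₁ : ℝ) :
    1 - stdNormalCDF x₁ = (Real.sqrt (2*Real.pi))⁻¹ * ∫ s in Ioi x₁, Real.exp (-(s^2/2)) := by
  have hint : Integrable (fun s : ℝ => Real.exp (-(s^2/2))) := by
    rw [gauss_eq]; exact integrable_exp_neg_mul_sq (by norm_num)
  have htot : (∫ s : ℝ, Real.exp (-(s^2/2))) = Real.sqrt (2*Real.pi) := by
    rw [gauss_eq, integral_gaussian]
    congr 1; ring
  have hsplit := intervalIntegral.integral_Iic_add_Ioi (b := x₁) hint.integrableOn hint.integrableOn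
  rw [htot] at hsplit
  have hcdf : stdNormalCDF x₁ = (Real.sqrt (2*Real.pi))⁻¹ * ∫ s in Iic x₁, Real.exp (-(s^2/2)) := by
    unfold stdNormalCDF
    rw [← integral_const_mul]
    congr 1; funext s; congr 2; ring
  rw [hcdf]
  have hs : (0:ℝ) < Real.sqrt (2*Real.pi) := Real.sqrt_pos.mpr (by positivity)
  have hone : (Real.sqrt (2*Real.pi))⁻¹ * ((∫ s in Iic x₁, Real.exp (-(s^2/2))) +
      ∫ s in Ioi x₁, Real.exp (-(s^2/2))) = 1 := by
    rw [hsplit, inv_mul_cancel₀ hs.ne']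
  rw [mul_add] at hone
  linarith

end Aux

open Set in
theorem laplace_transform_identity (x₁ : ℝ) (hx : 0 < x₁) :
    (∫ z in Set.Ioi (1 / 2 : ℝ),
        (4 * Real.pi * z * Real.sqrt (2 * z - 1))⁻¹ * Real.exp (-(x₁ ^ 2 * z))) =
      (1 / 2) * (1 - stdNormalCDF x₁) := by
  rw [step_subst x₁ hx]
  have h1 : ∀ u : ℝ, (2*Real.pi*(1+u^2))⁻¹ * Real.exp (-(x₁^2*((1+u^2)/2))) =
      (2*Real.pi)⁻¹ * ∫ s in Ioi x₁, s * Real.exp (-((1+u^2)/2 * s^2)) :=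
    fun u => step_inner x₁ u hx
  simp_rw [h1]
  rw [integral_const_mul, step_fubini x₁ hx]
  have h2 : (∫ s in Ioi x₁, ∫ u in Ioi (0:ℝ), s * Real.exp (-((1+u^2)/2 * s^2))) =
      ∫ s in Ioi x₁, Real.sqrt (2*Real.pi)/2 * Real.exp (-(s^2/2)) := by
    apply setIntegral_congr_fun measurableSet_Ioi
    intro s hs
    exact step_gauss x₁ s (hx.trans hs)
  rw [h2, integral_const_mul, cdf_compl]
  have h : Real.sqrt (2*Real.pi) * Real.sqrt (2*Real.pi) = 2*Real.pi :=
    Real.mul_self_sqrt (by positivity)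
  have hs : (0:ℝ) < Real.sqrt (2*Real.pi) := Real.sqrt_pos.mpr (by positivity)
  have hpi := Real.pi_pos
  have key : (2*Real.pi)⁻¹ * (Real.sqrt (2*Real.pi)/2) = 1/2 * (Real.sqrt (2*Real.pi))⁻¹ := by
    rw [← h]; field_simp; rw [Real.sqrt_sq (Real.sqrt_nonneg _)]
  rw [← mul_assoc, key, mul_assoc]
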